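/- Let (A, B) be a diagonally Riccati stable pair in ℝ^{n×n}, and let D, E be diagonal matrices with diagonal entries d_ii, e_ii satisfying 0 < e_ii² ≤ d_ii² for all i. Then the pair (DAD, DBE) is also diagonally Riccati stable; moreover, if P, Q are diagonal positive definite matrices satisfying the Riccati inequality for (A, B), then P and DQD satisfy it for (DAD, DBE). -/

import Mathlib

open Matrix

/-- The pair `(A, B)` is diagonally Riccati stable. -/
def DiagRiccatiStable {m : ℕ} (A B : Matrix (Fin m) (Fin m) ℝ) : Prop :=
  ∃ P Q : Matrix (Fin m) (Fin m) ℝ, P.IsDiag ∧ Q.IsDiag ∧ P.PosDef ∧ Q.PosDef ∧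
    (-(Aᵀ * P + P * A + Q + P * B * Q⁻¹ * Bᵀ * P)).PosDef

lemma diag_conj_posDef {n : ℕ} {d : Fin n → ℝ} (hd : ∀ i, d i ≠ 0)
    {X : Matrix (Fin n) (Fin n) ℝ} (hX : X.PosDef) :
    (diagonal d * X * diagonal d).PosDef := by
  refine posDef_iff_dotProduct_mulVec.mpr ⟨?_, ?_⟩
  · have hX1 := hX.isHermitian
    simp only [IsHermitian, conjTranspose_mul, diagonal_conjTranspose, star_trivial] at *
    rw [← mul_assoc, hX1]
  · intro x hx
    have hy : diagonal d *ᵥ x ≠ 0 := by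
      intro h
      apply hx
      funext i
      have := congrFun h i
      simp [mulVec_diagonal] at this
      rcases this with h1 | h1
      · exact absurd h1 (hd i)
      · simpa using h1
    have := hX.dotProduct_mulVec_pos hy
    calc (0:ℝ) < star (diagonal d *ᵥ x) ⬝ᵥ X *ᵥ (diagonal d *ᵥ x) := this
      _ = star x ⬝ᵥ (diagonal d * X * diagonal d) *ᵥ x := by
          simp only [← mulVec_mulVec, dotProduct, mulVec_diagonal, star_trivial,
            Pi.star_apply]
          exact Finset.sum_congr rfl fun i _ => by ring

lemma key_identity {n : ℕ} (A B : Matrix (Fin n) (Fin n) ℝ) (d e p q : Fin n → ℝ)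
    (hd : ∀ i, d i ≠ 0) (hq : ∀ i, q i ≠ 0) :
    -((diagonal d * A * diagonal d)ᵀ * diagonal p + diagonal p * (diagonal d * A * diagonal d) +
        diagonal d * diagonal q * diagonal d +
        diagonal p * (diagonal d * B * diagonal e) * (diagonal d * diagonal q * diagonal d)⁻¹ *
          (diagonal d * B * diagonal e)ᵀ * diagonal p) =
    diagonal d * ((-(Aᵀ * diagonal p + diagonal p * A + diagonal q +
        diagonal p * B * (diagonal q)⁻¹ * Bᵀ * diagonal p)) +
      diagonal p * B * diagonal (fun i => (q i)⁻¹ - (e i)^2 * ((d i)^2 * (q i))⁻¹) * Bᵀ *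
        diagonal p) * diagonal d := by
  have h1 : (diagonal d * diagonal q * diagonal d)⁻¹
      = diagonal (fun i => (d i * q i * d i)⁻¹) := by
    rw [diagonal_mul_diagonal, diagonal_mul_diagonal]
    apply inv_eq_right_inv
    rw [diagonal_mul_diagonal,
      show (fun i => (d i * q i * d i) * (d i * q i * d i)⁻¹) = fun _ : Fin n => (1:ℝ) from
        funext fun i => mul_inv_cancel₀ (mul_ne_zero (mul_ne_zero (hd i) (hq i)) (hd i)),
      diagonal_one]
  have h2 : (diagonal q : Matrix (Fin n) (Fin n) ℝ)⁻¹ = diagonal (fun i => (q i)⁻¹) := by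
    apply inv_eq_right_inv
    rw [diagonal_mul_diagonal,
      show (fun i => q i * (q i)⁻¹) = fun _ : Fin n => (1:ℝ) from
        funext fun i => mul_inv_cancel₀ (hq i), diagonal_one]
  rw [h1, h2]
  ext i j
  simp [mul_apply, diagonal_apply, transpose_apply, ite_mul, mul_ite,
    Finset.sum_ite_eq, Finset.sum_ite_eq', Finset.mul_sum, Finset.sum_mul]
  have hs : ∑ k : Fin n,
        p i * (d i * B i k * e k) * ((d k)⁻¹ * ((q k)⁻¹ * (d k)⁻¹)) * (e k * (B j k * d j)) * p j
      = ∑ k : Fin n, (d i * (p i * B i k * (q k)⁻¹ * B j k * p j) * d j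
        - d i * (p i * B i k * ((q k)⁻¹ - e k ^ 2 * ((q k)⁻¹ * (d k ^ 2)⁻¹)) * B j k * p j) * d j) :=
    Finset.sum_congr rfl fun k _ => by field_simp; ring
  rw [hs, Finset.sum_sub_distrib,
    show ∑ k : Fin n, d i * (p i * B i k * (q k)⁻¹ * B j k * p j) * d j
        = d i * (∑ k : Fin n, p i * B i k * (q k)⁻¹ * B j k * p j) * d j by
      rw [Finset.mul_sum, Finset.sum_mul],
    show ∑ k : Fin n, d i * (p i * B i k * ((q k)⁻¹ - e k ^ 2 * ((q k)⁻¹ * (d k ^ 2)⁻¹)) * B j k * p j) * d j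
        = d i * (∑ k : Fin n, p i * B i k * ((q k)⁻¹ - e k ^ 2 * ((q k)⁻¹ * (d k ^ 2)⁻¹)) * B j k * p j) * d j by
      rw [Finset.mul_sum, Finset.sum_mul]]
  by_cases hij : i = j
  · subst hij
    simp only [if_pos rfl, eq_self_iff_true, if_true]
    ring
  · simp only [if_neg hij]
    ring

lemma semidef_part {n : ℕ} (B : Matrix (Fin n) (Fin n) ℝ) (p m : Fin n → ℝ)
    (hm : ∀ i, 0 ≤ m i) :
    (diagonal p * B * diagonal m * Bᵀ * diagonal p).PosSemidef := by
  have h := (posSemidef_diagonal_iff.mpr hm).mul_mul_conjTranspose_same (diagonal p * B)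
  have he : (diagonal p * B)ᴴ = Bᵀ * diagonal p := by
    rw [conjTranspose_mul, diagonal_conjTranspose]
    simp [conjTranspose_eq_transpose_of_trivial, star_trivial]
  rw [he] at h
  simpa [mul_assoc] using h

lemma main_step {n : ℕ} (A B D E : Matrix (Fin n) (Fin n) ℝ) (hD : D.IsDiag) (hE : E.IsDiag)
    (hde : ∀ i : Fin n, 0 < (E i i) ^ 2 ∧ (E i i) ^ 2 ≤ (D i i) ^ 2)
    (P Q : Matrix (Fin n) (Fin n) ℝ) (hP : P.IsDiag) (hQ : Q.IsDiag)
    (hPpd : P.PosDef) (hQpd : Q.PosDef)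
    (hR : (-(Aᵀ * P + P * A + Q + P * B * Q⁻¹ * Bᵀ * P)).PosDef) :
    (-((D * A * D)ᵀ * P + P * (D * A * D) + D * Q * D +
        P * (D * B * E) * (D * Q * D)⁻¹ * (D * B * E)ᵀ * P)).PosDef := by
  obtain ⟨d, rfl⟩ : ∃ d', D = diagonal d' := ⟨D.diag, hD.diagonal_diag.symm⟩
  obtain ⟨e, rfl⟩ : ∃ e', E = diagonal e' := ⟨E.diag, hE.diagonal_diag.symm⟩
  obtain ⟨p, rfl⟩ : ∃ p', P = diagonal p' := ⟨P.diag, hP.diagonal_diag.symm⟩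
  obtain ⟨q, rfl⟩ : ∃ q', Q = diagonal q' := ⟨Q.diag, hQ.diagonal_diag.symm⟩
  have hq : ∀ i, 0 < q i := posDef_diagonal_iff.mp hQpd
  have hd : ∀ i, d i ≠ 0 := by
    intro i
    have h := (hde i).1.trans_le (hde i).2
    simp only [diagonal_apply_eq] at h
    exact pow_ne_zero_iff (n := 2) (by norm_num) |>.mp h.ne'
  rw [key_identity A B d e p q hd (fun i => (hq i).ne')]
  apply diag_conj_posDef hd
  apply hR.add_posSemidef
  apply semidef_part
  intro i
  have h1 := (hde i).2
  simp only [diagonal_apply_eq] at h1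
  rw [sub_nonneg]
  have hqi := hq i
  have hdi := hd i
  have h2 : (e i) ^ 2 * ((d i) ^ 2 * q i)⁻¹ ≤ (d i) ^ 2 * ((d i) ^ 2 * q i)⁻¹ := by
    gcongr
  refine h2.trans_eq ?_
  rw [mul_inv, ← mul_assoc, mul_inv_cancel₀ (pow_ne_zero 2 hdi), one_mul]

theorem diag_riccati_DAD_DBE {n : ℕ} (A B D E : Matrix (Fin n) (Fin n) ℝ)
    (hAB : DiagRiccatiStable A B) (hD : D.IsDiag) (hE : E.IsDiag)
    (hde : ∀ i : Fin n, 0 < (E i i) ^ 2 ∧ (E i i) ^ 2 ≤ (D i i) ^ 2) :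
    DiagRiccatiStable (D * A * D) (D * B * E) ∧
      ∀ P Q : Matrix (Fin n) (Fin n) ℝ, P.IsDiag → Q.IsDiag → P.PosDef → Q.PosDef →
        (-(Aᵀ * P + P * A + Q + P * B * Q⁻¹ * Bᵀ * P)).PosDef →
        (-((D * A * D)ᵀ * P + P * (D * A * D) + D * Q * D +
            P * (D * B * E) * (D * Q * D)⁻¹ * (D * B * E)ᵀ * P)).PosDef := by
  constructor
  · obtain ⟨P, Q, hP, hQ, hPpd, hQpd, hR⟩ := hAB
    refine ⟨P, D * Q * D, hP, ?_, hPpd, ?_, main_step A B D E hD hE hde P Q hP hQ hPpd hQpd hR⟩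
    · obtain ⟨d, rfl⟩ : ∃ d', D = diagonal d' := ⟨D.diag, hD.diagonal_diag.symm⟩
      obtain ⟨q, rfl⟩ : ∃ q', Q = diagonal q' := ⟨Q.diag, hQ.diagonal_diag.symm⟩
      rw [diagonal_mul_diagonal, diagonal_mul_diagonal]
      exact isDiag_diagonal _
    · obtain ⟨d, rfl⟩ : ∃ d', D = diagonal d' := ⟨D.diag, hD.diagonal_diag.symm⟩
      have hd : ∀ i, d i ≠ 0 := by
        intro i
        have h := (hde i).1.trans_le (hde i).2
        simp only [diagonal_apply_eq] at h
        exact pow_ne_zero_iff (n := 2) (by norm_num) |>.mp h.ne'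
      exact diag_conj_posDef hd hQpd
  · exact fun P Q hP hQ hPpd hQpd hR => main_step A B D E hD hE hde P Q hP hQ hPpd hQpd hR
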